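/- Let q be a prime power and α = (α₀,...,αₙ) ∈ F_q^{n+1} with rank H_{n₁,n₂}(α) = r, ρ(α) = r, π(α) = 0, where 0 ≤ r ≤ n₁ - 1. Among the q extensions α' = (α₀,...,αₙ,α_{n+1}) ∈ F_q^{n+2}: exactly one value of α_{n+1} gives ρ(α') = r and π(α') = 0 (rank of the extended near-square Hankel matrix remains r), and the other q-1 values give ρ(α') = r and π(α') = 1 (rank r+1). Moreover, in the first case the characteristic polynomials are unchanged (A₁' = A₁, A₂' = A₂), while in the second case A₁' = A₁ and A₂' = βA₂ + T^{c₂-c₁}A₁ for some β ∈ F_q^*, with c₁ = r, c₂ = n+2-r, and the correspondence α_{n+1} ↔ β is a bijection. -/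

import Mathlib

open Matrix Polynomial

/-- The `l × m` Hankel matrix whose `(i,j)` entry (zero-indexed) is `α (i + j)`. -/
def hankel (F : Type) [Field F] (l m : ℕ) (α : ℕ → F) : Matrix (Fin l) (Fin m) F :=
  Matrix.of fun i j => α (i.1 + j.1)

/-- `ρ(α)`: the largest `l ≤ n₁ = (n+2)/2` such that the top-left `l × l` Hankel matrix
of `α` is invertible (`0` if none exists). -/
noncomputable def rhoC (F : Type) [Field F] (n : ℕ) (α : ℕ → F) : ℕ :=
  sSup {l | l ≤ (n + 2) / 2 ∧ (hankel F l l α).det ≠ 0}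

/-- `π(α) = rank H_{n₁,n₂}(α) - ρ(α)`. -/
noncomputable def piC (F : Type) [Field F] (n : ℕ) (α : ℕ → F) : ℕ :=
  (hankel F ((n + 2) / 2) ((n + 3) / 2) α).rank - rhoC F n α

/-- `deg B ≤ k` for an integer bound `k` (so `k < 0` forces `B = 0`). -/
def degLE (F : Type) [Field F] (B : Polynomial F) (k : ℤ) : Prop :=
  ∀ i : ℕ, k < (i : ℤ) → B.coeff i = 0

/-- `A₁, A₂` are characteristic polynomials for the sequence `α` (of length `n+1`) with
first characteristic degree `c₁ = r` and second characteristic degree `c₂ = n+2-r`: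
the kernels of all the Hankel matrices `H_{l,m}(α)`, `l+m-2 = n`, consist exactly of the
(coefficient vectors of) polynomials `B₁A₁ + B₂A₂` with `deg B₁ ≤ m - c₁ - 1` and
`deg B₂ ≤ m - c₂ - 1`. -/
def IsCharSeq (F : Type) [Field F] (n r : ℕ) (A₁ A₂ : Polynomial F) (α : ℕ → F) : Prop :=
  ∀ l m : ℕ, 1 ≤ l → 1 ≤ m → l + m = n + 2 →
    {v : Fin m → F | (hankel F l m α).mulVec v = 0} =
    {v : Fin m → F | ∃ B₁ B₂ : Polynomial F,
      degLE F B₁ ((m : ℤ) - r - 1) ∧ degLE F B₂ ((m : ℤ) - ((n : ℤ) + 2 - r) - 1) ∧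
      v = fun i : Fin m => (B₁ * A₁ + B₂ * A₂).coeff (i : ℕ)}

/-- A sequence `α ∈ F^{n+1}` viewed as a function `ℕ → F` (zero beyond index `n`). -/
def extSeq (F : Type) [Field F] (n : ℕ) (α : Fin (n + 1) → F) : ℕ → F :=
  fun i => if h : i < n + 1 then α ⟨i, h⟩ else 0

/-- The extension of a sequence of length `n+1` by a new entry `c` at index `n+1`. -/
def extendSeq (F : Type) [Field F] (n : ℕ) (α : ℕ → F) (c : F) : ℕ → F :=
  fun i => if i = n + 1 then c else α i

namespace Stmt17

variable {F : Type} [Field F]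

/-- `Sval α i P = ∑ₖ α (i+k) * P.coeff k`. -/
noncomputable def Sval (α : ℕ → F) (i : ℕ) (P : F[X]) : F :=
  P.sum fun k a => α (i + k) * a

@[simp] lemma Sval_zero (α : ℕ → F) (i : ℕ) : Sval α i (0 : F[X]) = 0 := by
  simp [Sval]

lemma Sval_add (α : ℕ → F) (i : ℕ) (P Q : F[X]) :
    Sval α i (P + Q) = Sval α i P + Sval α i Q := by
  unfold Sval
  exact Polynomial.sum_add_index P Q _ (fun _ => by ring) (fun _ _ _ => by ring)

lemma Sval_monomial (α : ℕ → F) (i j : ℕ) (b : F) :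
    Sval α i (monomial j b) = α (i + j) * b := by
  unfold Sval
  exact Polynomial.sum_monomial_index b _ (by ring)

lemma Sval_finsum {β : Type*} (α : ℕ → F) (i : ℕ) (s : Finset β) (f : β → F[X]) :
    Sval α i (∑ b ∈ s, f b) = ∑ b ∈ s, Sval α i (f b) := by
  classical
  induction s using Finset.cons_induction with
  | empty => simp
  | cons a s ha ih =>
    rw [Finset.sum_cons, Finset.sum_cons, Sval_add, ih]

lemma Sval_monomial_mul (α : ℕ → F) (i j : ℕ) (b : F) (P : F[X]) :
    Sval α i (monomial j b * P) = b * Sval α (i + j) P := by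
  conv_lhs => rw [← Polynomial.sum_monomial_eq P]
  rw [Polynomial.sum_def, Finset.mul_sum, Sval_finsum]
  rw [Sval, Polynomial.sum_def, Finset.mul_sum]
  refine Finset.sum_congr rfl fun k hk => ?_
  rw [Polynomial.monomial_mul_monomial, Sval_monomial, ← Nat.add_assoc]
  ring

lemma Sval_C_mul (α : ℕ → F) (i : ℕ) (b : F) (P : F[X]) :
    Sval α i (C b * P) = b * Sval α i P := by
  have := Sval_monomial_mul α i 0 b P
  simpa [Polynomial.C_mul_X_pow_eq_monomial] using this

lemma Sval_X_pow_mul (α : ℕ → F) (i j : ℕ) (P : F[X]) :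
    Sval α i (X ^ j * P) = Sval α (i + j) P := by
  have := Sval_monomial_mul α i j 1 P
  simpa [← Polynomial.C_mul_X_pow_eq_monomial] using this

lemma Sval_mul (α : ℕ → F) (i : ℕ) (B P : F[X]) :
    Sval α i (B * P) = ∑ j ∈ B.support, B.coeff j * Sval α (i + j) P := by
  conv_lhs => rw [← Polynomial.sum_monomial_eq B]
  rw [Polynomial.sum_def, Finset.sum_mul, Sval_finsum]
  exact Finset.sum_congr rfl fun k hk => Sval_monomial_mul α i k _ P

lemma Sval_congr {α α' : ℕ → F} {i : ℕ} (P : F[X])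
    (h : ∀ k ∈ P.support, α (i + k) = α' (i + k)) : Sval α i P = Sval α' i P := by
  unfold Sval Polynomial.sum
  refine Finset.sum_congr rfl fun k hk => ?_
  simp only []
  rw [h k hk]

lemma Sval_eq_range (α : ℕ → F) (i : ℕ) (P : F[X]) {N : ℕ} (h : P.natDegree < N) :
    Sval α i P = ∑ k ∈ Finset.range N, α (i + k) * P.coeff k := by
  unfold Sval
  exact Polynomial.sum_over_range' P (fun _ => by ring) N h

/-- polynomial from a finite vector of coefficients -/
noncomputable def polyOf {m : ℕ} (v : Fin m → F) : F[X] :=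
  ∑ j : Fin m, monomial (j : ℕ) (v j)

lemma coeff_polyOf {m : ℕ} (v : Fin m → F) (k : ℕ) :
    (polyOf v).coeff k = if h : k < m then v ⟨k, h⟩ else 0 := by
  classical
  unfold polyOf
  rw [Polynomial.finset_sum_coeff]
  simp only [Polynomial.coeff_monomial]
  by_cases h : k < m
  · rw [dif_pos h, Finset.sum_eq_single (⟨k, h⟩ : Fin m)]
    · simp
    · intro b _ hb
      rw [if_neg]
      intro hc
      exact hb (Fin.ext (by simpa using hc))
    · intro hb
      exact absurd (Finset.mem_univ _) hb
  · rw [dif_neg h]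
    refine Finset.sum_eq_zero fun b _ => ?_
    rw [if_neg]
    intro hc
    exact h (hc ▸ b.2)

lemma natDegree_polyOf_lt {m : ℕ} (hm : 1 ≤ m) (v : Fin m → F) :
    (polyOf v).natDegree < m := by
  have h : (polyOf v).natDegree ≤ m - 1 := by
    rw [Polynomial.natDegree_le_iff_coeff_eq_zero]
    intro N hN
    rw [coeff_polyOf, dif_neg (by omega)]
  omega

lemma polyOf_coeffs {m : ℕ} (P : F[X]) (h : P.natDegree < m) :
    polyOf (fun i : Fin m => P.coeff (i : ℕ)) = P := by
  ext k
  rw [coeff_polyOf]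
  by_cases hk : k < m
  · rw [dif_pos hk]
  · rw [dif_neg hk]
    exact (Polynomial.coeff_eq_zero_of_natDegree_lt (by omega)).symm

lemma hankel_mulVec {l m : ℕ} (α : ℕ → F) (P : F[X]) (hP : P.natDegree < m) (i : Fin l) :
    (hankel F l m α).mulVec (fun k : Fin m => P.coeff (k : ℕ)) i = Sval α i P := by
  rw [Sval_eq_range α i P hP]
  rw [Matrix.mulVec, dotProduct]
  rw [← Fin.sum_univ_eq_sum_range (fun k => α (↑i + k) * P.coeff k) m]
  rfl

lemma mem_ker_iff {l m : ℕ} (hm : 1 ≤ m) (α : ℕ → F) (v : Fin m → F) :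
    (hankel F l m α).mulVec v = 0 ↔ ∀ i : Fin l, Sval α i (polyOf v) = 0 := by
  have hv : (fun k : Fin m => (polyOf v).coeff (k : ℕ)) = v := by
    funext k
    rw [coeff_polyOf, dif_pos k.2]
  constructor
  · intro h i
    rw [← hankel_mulVec α (polyOf v) (natDegree_polyOf_lt hm v) i, hv, h]
    rfl
  · intro h
    funext i
    rw [← hv, hankel_mulVec α (polyOf v) (natDegree_polyOf_lt hm v) i, h]
    rfl

lemma degLE_zero (k : ℤ) : degLE F 0 k := fun i _ => Polynomial.coeff_zero i

lemma eq_zero_of_degLE_neg {B : F[X]} {k : ℤ} (h : degLE F B k) (hk : k < 0) : B = 0 := by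
  ext i
  rw [h i (by omega), Polynomial.coeff_zero]

lemma degLE_of_natDegree_le {B : F[X]} {k : ℤ} (h : (B.natDegree : ℤ) ≤ k) : degLE F B k := by
  intro i hi
  exact Polynomial.coeff_eq_zero_of_natDegree_lt (by omega)

lemma natDegree_le_of_degLE {B : F[X]} {j : ℕ} (h : degLE F B (j : ℤ)) : B.natDegree ≤ j := by
  rw [Polynomial.natDegree_le_iff_coeff_eq_zero]
  intro N hN
  exact h N (by omega)



/-- extension by zero along `Fin.castLE` -/
noncomputable def extMap (k m : ℕ) (hkm : k ≤ m) : (Fin k → F) →ₗ[F] (Fin m → F) where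
  toFun v := fun j => if h : (j : ℕ) < k then v ⟨j, h⟩ else 0
  map_add' u v := by
    funext j
    by_cases h : (j : ℕ) < k <;> simp [h]
  map_smul' c v := by
    funext j
    by_cases h : (j : ℕ) < k <;> simp [h]

lemma rank_ge_of_submatrix {l' m' : ℕ} (A : Matrix (Fin l') (Fin m') F) (k : ℕ)
    (hkl : k ≤ l') (hkm : k ≤ m')
    (h : (A.submatrix (Fin.castLE hkl) (Fin.castLE hkm)).det ≠ 0) : k ≤ A.rank := by
  classical
  set B := A.submatrix (Fin.castLE hkl) (Fin.castLE hkm) with hB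
  have hunit : IsUnit B := (Matrix.isUnit_iff_isUnit_det B).2 (isUnit_iff_ne_zero.2 h)
  have hrkB : B.rank = k := by
    rw [Matrix.rank_of_isUnit B hunit, Fintype.card_fin]
  have key : B.mulVecLin =
      (LinearMap.funLeft F F (Fin.castLE hkl)).comp (A.mulVecLin.comp (extMap k m' hkm)) := by
    apply LinearMap.ext
    intro v
    funext i
    simp only [LinearMap.comp_apply, LinearMap.funLeft_apply, Matrix.mulVecLin_apply]
    rw [Matrix.mulVec, Matrix.mulVec, dotProduct, dotProduct]
    set g : ℕ → F := fun j => if h : j < m' then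
      A (Fin.castLE hkl i) ⟨j, h⟩ * (if h2 : j < k then v ⟨j, h2⟩ else 0) else 0 with hg
    have hL : ∑ j : Fin k, B i j * v j = ∑ j ∈ Finset.range k, g j := by
      rw [← Fin.sum_univ_eq_sum_range g k]
      refine Finset.sum_congr rfl fun j _ => ?_
      have hj1 : (j : ℕ) < m' := by omega
      rw [hg]
      simp only [hj1, j.2, dif_pos]
      rfl
    have hR : ∑ j : Fin m', A (Fin.castLE hkl i) j * (extMap k m' hkm) v j
        = ∑ j ∈ Finset.range m', g j := by
      rw [← Fin.sum_univ_eq_sum_range g m']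
      refine Finset.sum_congr rfl fun j _ => ?_
      rw [hg]
      simp only [j.2, dif_pos]
      rfl
    rw [hL, hR]
    apply Finset.sum_subset
    · intro x hx
      simp only [Finset.mem_range] at *
      omega
    · intro x hx1 hx2
      simp only [Finset.mem_range] at hx1 hx2
      rw [hg]
      simp [hx1, hx2]
  have h2 : B.rank ≤ Module.finrank F (LinearMap.range (A.mulVecLin.comp (extMap k m' hkm))) := by
    rw [Matrix.rank, key, LinearMap.range_comp]
    exact Submodule.finrank_map_le _ _
  have h3 : Module.finrank F (LinearMap.range (A.mulVecLin.comp (extMap k m' hkm)))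
      ≤ Module.finrank F (LinearMap.range A.mulVecLin) := by
    exact Submodule.finrank_mono (LinearMap.range_comp_le_range _ _)
  rw [← hrkB]
  exact le_trans h2 h3

/-- rank from an explicit parametrization of the kernel. -/
lemma rank_of_ker {l m : ℕ} (D : Matrix (Fin l) (Fin m) F) (d : ℕ)
    (Φ : (Fin d → F) →ₗ[F] (Fin m → F)) (hinj : Function.Injective Φ)
    (hker : ∀ v, D.mulVec v = 0 ↔ v ∈ LinearMap.range Φ) :
    D.rank + d = m := by
  have hk : LinearMap.ker D.mulVecLin = LinearMap.range Φ := by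
    ext v
    rw [LinearMap.mem_ker, Matrix.mulVecLin_apply, hker]
  have := LinearMap.finrank_range_add_finrank_ker D.mulVecLin
  rw [hk, LinearMap.finrank_range_of_inj hinj, Module.finrank_pi, Module.finrank_pi,
    Fintype.card_fin, Fintype.card_fin] at this
  rw [Matrix.rank]
  exact this


lemma polyOf_mul_add_coeffs {m : ℕ} {P : F[X]} (h : P.natDegree < m)
    {v : Fin m → F} (hv : v = fun i : Fin m => P.coeff (i : ℕ)) : polyOf v = P := by
  rw [hv]; exact polyOf_coeffs P h

lemma eq_zero_of_coeffs {m : ℕ} {P : F[X]} (h : P.natDegree < m)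
    (h2 : ∀ i : Fin m, P.coeff (i : ℕ) = 0) : P = 0 := by
  ext k
  rw [Polynomial.coeff_zero]
  by_cases hk : k < m
  · exact h2 ⟨k, hk⟩
  · exact Polynomial.coeff_eq_zero_of_natDegree_lt (by omega)

lemma polyOf_add {m : ℕ} (u v : Fin m → F) : polyOf (u + v) = polyOf u + polyOf v := by
  unfold polyOf
  rw [← Finset.sum_add_distrib]
  exact Finset.sum_congr rfl fun j _ => by simp

lemma polyOf_smul {m : ℕ} (c : F) (v : Fin m → F) : polyOf (c • v) = C c * polyOf v := by
  unfold polyOf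
  rw [Finset.mul_sum]
  refine Finset.sum_congr rfl fun j _ => ?_
  simp [Polynomial.C_mul_monomial]

/-- the degree bound in kernel combinations -/
lemma natDegree_comb_lt {B A : F[X]} {m k : ℕ} (hB : degLE F B ((m : ℤ) - k - 1))
    (hA : A.natDegree ≤ k) (hm : 1 ≤ m) : (B * A).natDegree < m := by
  by_cases hB0 : B = 0
  · subst hB0; simp only [zero_mul, Polynomial.natDegree_zero]; omega
  · by_cases hmk : (m : ℤ) - k - 1 < 0
    · exact absurd (eq_zero_of_degLE_neg hB hmk) hB0
    · have hkm : k + 1 ≤ m := by omega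
      have h1 : B.natDegree ≤ m - k - 1 := by
        apply natDegree_le_of_degLE
        intro i hi
        exact hB i (by push_cast; omega)
      calc (B * A).natDegree ≤ B.natDegree + A.natDegree := Polynomial.natDegree_mul_le
        _ < m := by omega

/-- The representation lemma: any `P` of degree `≤ N` is `B₁A₁ + B₂A₂`. -/
lemma rep_lemma {r N : ℕ} {A₁ A₂ : F[X]} (hcop : IsCoprime A₁ A₂)
    (hd1 : A₁.degree = (r : WithBot ℕ)) (hd2 : A₂.degree < (r : WithBot ℕ))
    (hrN : r ≤ N) (h2r : 2 * r ≤ N + 1) (P : F[X]) (hP : P.natDegree ≤ N) :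
    ∃ B₁ B₂ : F[X], P = B₁ * A₁ + B₂ * A₂ ∧ degLE F B₁ ((N : ℤ) - r) ∧
      degLE F B₂ ((r : ℤ) - 1) := by
  have hA1ne : A₁ ≠ 0 := fun h => by simp [h] at hd1
  have hnd1 : A₁.natDegree = r := Polynomial.natDegree_eq_of_degree_eq_some hd1
  have hndA2 : A₂.natDegree ≤ r - 1 := by
    by_cases hA2 : A₂ = 0
    · simp [hA2]
    · have := Polynomial.degree_eq_natDegree hA2 ▸ hd2
      have h2 : A₂.natDegree < r := by exact_mod_cast this
      omega
  rcases Nat.eq_zero_or_pos r with hr0 | hr1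
  · subst hr0
    have hC : A₁ = C (A₁.coeff 0) := Polynomial.eq_C_of_degree_le_zero (le_of_eq hd1)
    have ha : A₁.coeff 0 ≠ 0 := fun h => hA1ne (by rw [hC, h, Polynomial.C_0])
    refine ⟨C (A₁.coeff 0)⁻¹ * P, 0, ?_, ?_, degLE_zero _⟩
    · rw [zero_mul, add_zero]
      conv_lhs => rw [← one_mul P]
      rw [mul_comm (C (A₁.coeff 0)⁻¹ * P) A₁]
      nth_rewrite 1 [hC]
      rw [← mul_assoc, ← Polynomial.C_mul, mul_inv_cancel₀ ha, Polynomial.C_1]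
    · apply degLE_of_natDegree_le
      have : (C (A₁.coeff 0)⁻¹ * P).natDegree ≤ 0 + P.natDegree :=
        le_trans Polynomial.natDegree_mul_le (by simp)
      push_cast
      omega
  · obtain ⟨U, V, hUV⟩ := hcop
    have hM : (A₁ * C A₁.leadingCoeff⁻¹).Monic := Polynomial.monic_mul_leadingCoeff_inv hA1ne
    set B₂ := (V * P) %ₘ (A₁ * C A₁.leadingCoeff⁻¹) with hB₂def
    set q := (V * P) /ₘ (A₁ * C A₁.leadingCoeff⁻¹) with hqdef
    have hq : B₂ + (A₁ * C A₁.leadingCoeff⁻¹) * q = V * P := Polynomial.modByMonic_add_div _ _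
    have hdegM : (A₁ * C A₁.leadingCoeff⁻¹).degree = (r : WithBot ℕ) := by
      rw [mul_comm, Polynomial.degree_C_mul (inv_ne_zero
        (Polynomial.leadingCoeff_ne_zero.2 hA1ne)), hd1]
    have hdB₂ : B₂.degree < (r : WithBot ℕ) := by
      rw [← hdegM]; exact Polynomial.degree_modByMonic_lt _ hM
    have hndB₂ : B₂.natDegree ≤ r - 1 := by
      by_cases h0 : B₂ = 0
      · simp [h0]
      · have := Polynomial.degree_eq_natDegree h0 ▸ hdB₂
        have h2 : B₂.natDegree < r := by exact_mod_cast this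
        omega
    have hdvd : P - B₂ * A₂ = A₁ * (P * U + C A₁.leadingCoeff⁻¹ * q * A₂) := by
      linear_combination (-A₂) * hq + (-P) * hUV
    set B₁ := P * U + C A₁.leadingCoeff⁻¹ * q * A₂ with hB₁def
    have hrep : P = B₁ * A₁ + B₂ * A₂ := by linear_combination hdvd
    refine ⟨B₁, B₂, hrep, ?_, degLE_of_natDegree_le (by push_cast; omega)⟩
    apply degLE_of_natDegree_le
    by_cases hB10 : B₁ = 0
    · simp [hB10]; omega
    · have hnd : (A₁ * B₁).natDegree = r + B₁.natDegree := by
        rw [Polynomial.natDegree_mul hA1ne hB10, hnd1]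
      have hle : (P - B₂ * A₂).natDegree ≤ N := by
        apply le_trans (Polynomial.natDegree_sub_le _ _)
        have : (B₂ * A₂).natDegree ≤ (r-1) + (r-1) :=
          le_trans Polynomial.natDegree_mul_le (by omega)
        omega
      rw [hdvd, hnd] at hle
      push_cast
      omega


lemma extendSeq_ne {n : ℕ} {α : ℕ → F} {c : F} {j : ℕ} (h : j ≠ n + 1) :
    extendSeq F n α c j = α j := if_neg h

@[simp] lemma extendSeq_top {n : ℕ} {α : ℕ → F} {c : F} :
    extendSeq F n α c (n + 1) = c := if_pos rfl

lemma Sval_extend {n : ℕ} {α : ℕ → F} {c : F} {i : ℕ} {Q : F[X]}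
    (h : i + Q.natDegree ≤ n) : Sval (extendSeq F n α c) i Q = Sval α i Q := by
  symm
  apply Sval_congr
  intro k hk
  have := Polynomial.le_natDegree_of_mem_supp k hk
  rw [extendSeq_ne (by omega)]

section Facts

variable {n r : ℕ} {α : ℕ → F} {A₁ A₂ : F[X]}

/-- the recurrence from `A₁`. -/
lemma fzero (hrn : r ≤ n) (hnd1 : A₁.natDegree = r)
    (hchar : IsCharSeq F n r A₁ A₂ α) :
    ∀ i, i + r ≤ n → Sval α i A₁ = 0 := by
  have hset := hchar (n + 1 - r) (r + 1) (by omega) (by omega) (by omega)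
  rw [Set.ext_iff] at hset
  have hmem := (hset (fun i : Fin (r+1) => A₁.coeff (i : ℕ))).2 (by
    refine ⟨1, 0, ?_, degLE_zero _, by simp⟩
    intro i hi
    rw [Polynomial.coeff_one, if_neg (by push_cast at hi; omega)])
  have hker := (mem_ker_iff (by omega) α _).1 hmem
  intro i hi
  have h2 := hker ⟨i, by omega⟩
  rwa [polyOf_coeffs A₁ (by omega)] at h2

/-- the vanishing rows for `A₂`. -/
lemma ezero (hrn : 2 * r ≤ n + 2) (hndA2 : A₂.natDegree ≤ r - 1)
    (hchar : IsCharSeq F n r A₁ A₂ α) :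
    ∀ i, i + 2 ≤ r → Sval α i A₂ = 0 := by
  intro i hi
  have hr2 : 2 ≤ r := by omega
  have hset := hchar (r - 1) (n + 3 - r) (by omega) (by omega) (by omega)
  rw [Set.ext_iff] at hset
  have hmem := (hset (fun i : Fin (n+3-r) => A₂.coeff (i : ℕ))).2 (by
    refine ⟨0, 1, degLE_zero _, ?_, by simp⟩
    intro j hj
    have hc : ((n+3-r : ℕ) : ℤ) = (n : ℤ) + 3 - r := by omega
    rw [hc] at hj
    rw [Polynomial.coeff_one, if_neg (by omega)])
  have hker := (mem_ker_iff (by omega) α _).1 hmem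
  have h2 := hker ⟨i, by omega⟩
  rwa [polyOf_coeffs A₂ (by omega)] at h2

lemma A2_ne_zero (hr1 : 1 ≤ r) (hcop : IsCoprime A₁ A₂)
    (hd1 : A₁.degree = (r : WithBot ℕ)) : A₂ ≠ 0 := by
  intro h
  rw [h] at hcop
  have := (isCoprime_zero_right).1 hcop
  have hdeg := Polynomial.degree_eq_zero_of_isUnit this
  rw [hd1] at hdeg
  exact absurd (by exact_mod_cast hdeg) (by omega)

lemma e_ne (hr1 : 1 ≤ r) (h2r : 2 * r ≤ n + 2) (hndA2 : A₂.natDegree ≤ r - 1)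
    (hA2ne : A₂ ≠ 0) (hdet : (hankel F r r α).det ≠ 0)
    (he : ∀ i, i + 2 ≤ r → Sval α i A₂ = 0) :
    Sval α (r - 1) A₂ ≠ 0 := by
  intro h0
  have hker : (hankel F r r α).mulVec (fun i : Fin r => A₂.coeff (i : ℕ)) = 0 := by
    rw [mem_ker_iff hr1 α]
    intro i
    rw [polyOf_coeffs A₂ (by omega)]
    rcases Nat.lt_or_ge (i : ℕ) (r - 1) with h | h
    · exact he i (by omega)
    · have : (i : ℕ) = r - 1 := by have := i.2; omega
      rw [this]; exact h0
  have hunit : IsUnit (hankel F r r α).det := isUnit_iff_ne_zero.2 hdet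
  have hv0 : (fun i : Fin r => A₂.coeff (i : ℕ)) = 0 := by
    have h1 := congrArg ((hankel F r r α)⁻¹.mulVec ·) hker
    simp only [Matrix.mulVec_mulVec] at h1
    rw [Matrix.nonsing_inv_mul _ hunit] at h1
    simpa using h1
  apply hA2ne
  apply eq_zero_of_coeffs (m := r) (by omega)
  intro i
  exact congrFun hv0 i

end Facts


lemma sum_collapse {B : F[X]} {G : ℕ → F} (t : ℕ)
    (h : ∀ j ∈ B.support, j ≠ t → G j = 0) :
    ∑ j ∈ B.support, B.coeff j * G j = B.coeff t * G t := by
  refine Finset.sum_eq_single t (fun j hj hne => by rw [h j hj hne, mul_zero]) (fun ht => ?_)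
  rw [Polynomial.notMem_support_iff.1 ht, zero_mul]

section Main

variable {n r : ℕ} {α : ℕ → F} {A₁ A₂ : F[X]} {c : F}

lemma hf'_ext (h2r : 2 * r ≤ n) (hnd1 : A₁.natDegree = r)
    (hf : ∀ i, i + r ≤ n → Sval α i A₁ = 0) :
    ∀ i, i + r ≤ n → Sval (extendSeq F n α c) i A₁ = 0 := by
  intro i hi
  rw [Sval_extend (by omega)]
  exact hf i hi

lemma he'_ext (h2r : 2 * r ≤ n) (hndA2 : A₂.natDegree ≤ r - 1)
    (he : ∀ i, i + 2 ≤ r → Sval α i A₂ = 0) :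
    ∀ i, i + 2 ≤ r → Sval (extendSeq F n α c) i A₂ = 0 := by
  intro i hi
  rw [Sval_extend (by omega)]
  exact he i hi

/-- the common first step of the kernel computation: the old representation. -/
lemma old_rep (h2r : 2 * r ≤ n)
    (hcop : IsCoprime A₁ A₂) (hd1 : A₁.degree = (r : WithBot ℕ))
    (hd2 : A₂.degree < (r : WithBot ℕ)) (hchar : IsCharSeq F n r A₁ A₂ α)
    {l m : ℕ} (hl : 1 ≤ l) (hm : 1 ≤ m) (hlm : l + m = n + 3)
    {v : Fin m → F} (hv : (hankel F l m (extendSeq F n α c)).mulVec v = 0) :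
    ∃ B₁ B₂ : F[X], degLE F B₁ ((m : ℤ) - r - 1) ∧
      degLE F B₂ ((m : ℤ) - ((n : ℤ) + 2 - r) - 1) ∧
      v = fun i : Fin m => (B₁ * A₁ + B₂ * A₂).coeff (i : ℕ) := by
  rcases Nat.lt_or_ge l 2 with hl1 | hl2
  · have hl' : l = 1 := by omega
    have hm' : m = n + 2 := by omega
    obtain ⟨B₁, B₂, hPrep, hB1, hB2⟩ := rep_lemma (N := n + 1) hcop hd1 hd2
      (by omega) (by omega) (polyOf v) (by have := natDegree_polyOf_lt hm v; omega)
    refine ⟨B₁, B₂, ?_, ?_, ?_⟩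
    · intro i hi
      exact hB1 i (by omega)
    · intro i hi
      exact hB2 i (by omega)
    · funext i
      rw [← hPrep, coeff_polyOf, dif_pos i.2]
  · have hold := hchar (l - 1) m (by omega) hm (by omega)
    rw [Set.ext_iff] at hold
    refine (hold v).1 ?_
    show (hankel F (l-1) m α).mulVec v = 0
    funext i
    rw [Pi.zero_apply]
    have h1 : (hankel F (l-1) m α).mulVec v i
        = (hankel F l m (extendSeq F n α c)).mulVec v ⟨(i : ℕ), by omega⟩ := by
      rw [Matrix.mulVec, Matrix.mulVec, dotProduct, dotProduct]
      refine Finset.sum_congr rfl fun j _ => ?_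
      have hij : ((i : ℕ) + (j : ℕ)) ≠ n + 1 := by
        have := i.2; have := j.2; omega
      show α ((i : ℕ) + (j : ℕ)) * v j = extendSeq F n α c ((i : ℕ) + (j : ℕ)) * v j
      rw [extendSeq_ne hij]
    rw [h1]
    have := congrFun hv ⟨(i : ℕ), by omega⟩
    rwa [Pi.zero_apply] at this

/-- the last-row relation. -/
lemma last_row (h2r : 2 * r ≤ n) (hnd1 : A₁.natDegree = r) (hndA2 : A₂.natDegree ≤ r - 1)
    (hf : ∀ i, i + r ≤ n → Sval α i A₁ = 0) (he : ∀ i, i + 2 ≤ r → Sval α i A₂ = 0)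
    {l m : ℕ} (hl : 1 ≤ l) (hm : 1 ≤ m) (hlm : l + m = n + 3)
    {B₁ B₂ : F[X]} (hB1 : degLE F B₁ ((m : ℤ) - r - 1))
    (hB2 : degLE F B₂ ((m : ℤ) - ((n : ℤ) + 2 - r) - 1))
    (hlast : Sval (extendSeq F n α c) (l - 1) (B₁ * A₁ + B₂ * A₂) = 0) :
    B₁.coeff (m - r - 1) * Sval (extendSeq F n α c) (n + 1 - r) A₁
      + B₂.coeff (r - l) * Sval α (r - 1) A₂ = 0 := by
  rw [Sval_add, Sval_mul, Sval_mul] at hlast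
  rw [sum_collapse (m - r - 1) (fun j hj hne => ?side1),
      sum_collapse (r - l) (fun j hj hne => ?side2)] at hlast
  case side1 =>
    have hc : (j : ℤ) ≤ (m : ℤ) - r - 1 := by
      by_contra hgt
      exact (Polynomial.mem_support_iff.1 hj) (hB1 j (by omega))
    rw [Sval_extend (by omega)]
    exact hf _ (by omega)
  case side2 =>
    have hc : (j : ℤ) ≤ (m : ℤ) - ((n : ℤ) + 2 - r) - 1 := by
      by_contra hgt
      exact (Polynomial.mem_support_iff.1 hj) (hB2 j (by omega))
    rw [Sval_extend (by omega)]
    exact he _ (by omega)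
  -- now massage indices
  have hA2eq : B₂.coeff (r - l) * Sval (extendSeq F n α c) (l - 1 + (r - l)) A₂
      = B₂.coeff (r - l) * Sval α (r - 1) A₂ := by
    rcases Nat.lt_or_ge r l with hrl | hrl
    · have hB20 : B₂ = 0 := eq_zero_of_degLE_neg hB2 (by omega)
      rw [hB20]
      simp
    · rw [show l - 1 + (r - l) = r - 1 by omega]
      have e2 : Sval (extendSeq F n α c) (r - 1) A₂ = Sval α (r - 1) A₂ :=
        Sval_extend (by omega)
      rw [e2]
  have hA1eq : B₁.coeff (m - r - 1) * Sval (extendSeq F n α c) (l - 1 + (m - r - 1)) A₁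
      = B₁.coeff (m - r - 1) * Sval (extendSeq F n α c) (n + 1 - r) A₁ := by
    rcases Nat.lt_or_ge m (r + 1) with hmr | hmr
    · have hB10 : B₁ = 0 := eq_zero_of_degLE_neg hB1 (by omega)
      rw [hB10]
      simp
    · rw [show l - 1 + (m - r - 1) = n + 1 - r by omega]
  rw [← hA1eq, ← hA2eq]
  exact hlast

lemma charseq_zero (h2r : 2 * r ≤ n) (hnd1 : A₁.natDegree = r) (hndA2 : A₂.natDegree ≤ r - 1)
    (hcop : IsCoprime A₁ A₂) (hd1 : A₁.degree = (r : WithBot ℕ))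
    (hd2 : A₂.degree < (r : WithBot ℕ)) (hchar : IsCharSeq F n r A₁ A₂ α)
    (hf : ∀ i, i + r ≤ n → Sval α i A₁ = 0) (he : ∀ i, i + 2 ≤ r → Sval α i A₂ = 0)
    (hdne : 1 ≤ r → Sval α (r - 1) A₂ ≠ 0)
    (hs : Sval (extendSeq F n α c) (n + 1 - r) A₁ = 0) :
    IsCharSeq F (n + 1) r A₁ A₂ (extendSeq F n α c) := by
  intro l m hl hm hlm
  have hlm' : l + m = n + 3 := by omega
  have hf' : ∀ i, i + r ≤ n + 1 → Sval (extendSeq F n α c) i A₁ = 0 := by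
    intro i hi
    rcases Nat.lt_or_ge (i + r) (n + 1) with h | h
    · exact hf'_ext h2r hnd1 hf i (by omega)
    · rw [show i = n + 1 - r by omega]
      exact hs
  ext v
  simp only [Set.mem_setOf_eq]
  constructor
  · intro hv
    obtain ⟨B₁, B₂, hB1, hB2, hveq⟩ := old_rep h2r hcop hd1 hd2 hchar hl hm hlm' hv
    have hPm1 : (B₁ * A₁).natDegree < m := natDegree_comb_lt (k := r) hB1 (le_of_eq hnd1) hm
    have hPm2 : (B₂ * A₂).natDegree < m := by
      refine natDegree_comb_lt (k := n + 2 - r) ?_ (by omega) hm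
      intro i hi
      exact hB2 i (by omega)
    have hPm : (B₁ * A₁ + B₂ * A₂).natDegree < m :=
      lt_of_le_of_lt (Polynomial.natDegree_add_le _ _) (by omega)
    have hlast : Sval (extendSeq F n α c) (l - 1) (B₁ * A₁ + B₂ * A₂) = 0 := by
      have h2 := (mem_ker_iff hm _ v).1 hv ⟨l - 1, by omega⟩
      rwa [polyOf_mul_add_coeffs hPm hveq] at h2
    have hrel := last_row h2r hnd1 hndA2 hf he hl hm hlm' hB1 hB2 hlast
    have hB2top : B₂.coeff (r - l) = 0 := by
      rcases Nat.lt_or_ge r l with hrl | hrl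
      · rw [eq_zero_of_degLE_neg hB2 (by omega)]
        exact Polynomial.coeff_zero _
      · rw [hs, mul_zero, zero_add] at hrel
        exact (mul_eq_zero.1 hrel).resolve_right (hdne (by omega))
    refine ⟨B₁, B₂, hB1, ?_, hveq⟩
    intro i hi
    push_cast at hi
    rcases Int.lt_or_le ((m : ℤ) - ((n : ℤ) + 2 - r) - 1) (i : ℤ) with h | h
    · exact hB2 i (by omega)
    · rw [show i = r - l by omega]
      exact hB2top
  · rintro ⟨B₁, B₂, hB1, hB2, rfl⟩
    have hPm1 : (B₁ * A₁).natDegree < m := natDegree_comb_lt (k := r) hB1 (le_of_eq hnd1) hm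
    have hPm2 : (B₂ * A₂).natDegree < m := by
      refine natDegree_comb_lt (k := n + 3 - r) ?_ (by omega) hm
      intro i hi
      exact hB2 i (by push_cast; omega)
    have hPm : (B₁ * A₁ + B₂ * A₂).natDegree < m :=
      lt_of_le_of_lt (Polynomial.natDegree_add_le _ _) (by omega)
    rw [mem_ker_iff hm]
    intro i
    rw [polyOf_coeffs _ hPm, Sval_add, Sval_mul, Sval_mul]
    have hz1 : ∀ j ∈ B₁.support, B₁.coeff j * Sval (extendSeq F n α c) ((i : ℕ) + j) A₁ = 0 := by
      intro j hj
      have hc : (j : ℤ) ≤ (m : ℤ) - r - 1 := by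
        by_contra hgt
        exact (Polynomial.mem_support_iff.1 hj) (hB1 j (by omega))
      rw [hf' _ (by have := i.2; omega), mul_zero]
    have hz2 : ∀ j ∈ B₂.support, B₂.coeff j * Sval (extendSeq F n α c) ((i : ℕ) + j) A₂ = 0 := by
      intro j hj
      have hc : (j : ℤ) ≤ (m : ℤ) - ((n : ℤ) + 1 + 2 - r) - 1 := by
        by_contra hgt
        exact (Polynomial.mem_support_iff.1 hj) (hB2 j (by push_cast; omega))
      rw [he'_ext h2r hndA2 he _ (by have := i.2; omega), mul_zero]
    rw [Finset.sum_eq_zero hz1, Finset.sum_eq_zero hz2, add_zero]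


lemma charseq_one (h2r : 2 * r ≤ n) (hnd1 : A₁.natDegree = r) (hndA2 : A₂.natDegree ≤ r - 1)
    (hcop : IsCoprime A₁ A₂) (hd1 : A₁.degree = (r : WithBot ℕ))
    (hd2 : A₂.degree < (r : WithBot ℕ)) (hchar : IsCharSeq F n r A₁ A₂ α)
    (hf : ∀ i, i + r ≤ n → Sval α i A₁ = 0) (he : ∀ i, i + 2 ≤ r → Sval α i A₂ = 0)
    {d : F} (hd0 : d ≠ 0) (hd : 1 ≤ r → d = Sval α (r - 1) A₂)
    (hs : Sval (extendSeq F n α c) (n + 1 - r) A₁ ≠ 0) :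
    IsCharSeq F (n + 1) (r + 1) A₁
      (C (-(Sval (extendSeq F n α c) (n + 1 - r) A₁) / d) * A₂ + X ^ (n + 2 - 2 * r) * A₁)
      (extendSeq F n α c) := by
  set s := Sval (extendSeq F n α c) (n + 1 - r) A₁ with hsdef
  set β : F := -s / d with hβdef
  have hβ : β ≠ 0 := div_ne_zero (neg_ne_zero.2 hs) hd0
  have hββ : (C β⁻¹ : F[X]) * C β = 1 := by
    rw [← Polynomial.C_mul, inv_mul_cancel₀ hβ, Polynomial.C_1]
  set g := n + 2 - 2 * r with hgdef
  set A₂' : F[X] := C β * A₂ + X ^ g * A₁ with hA₂'def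
  have hndA2' : A₂'.natDegree ≤ n + 2 - r := by
    refine le_trans (Polynomial.natDegree_add_le _ _) (max_le ?_ ?_)
    · refine le_trans Polynomial.natDegree_mul_le ?_
      simp only [Polynomial.natDegree_C]
      omega
    · refine le_trans Polynomial.natDegree_mul_le ?_
      rw [Polynomial.natDegree_X_pow, hnd1]
      omega
  intro l m hl hm hlm
  have hlm' : l + m = n + 3 := by omega
  ext v
  simp only [Set.mem_setOf_eq]
  constructor
  · intro hv
    obtain ⟨B₁, B₂, hB1, hB2, hveq⟩ := old_rep h2r hcop hd1 hd2 hchar hl hm hlm' hv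
    have hPm1 : (B₁ * A₁).natDegree < m := natDegree_comb_lt (k := r) hB1 (le_of_eq hnd1) hm
    have hPm2 : (B₂ * A₂).natDegree < m := by
      refine natDegree_comb_lt (k := n + 2 - r) ?_ (by omega) hm
      intro i hi
      exact hB2 i (by omega)
    have hPm : (B₁ * A₁ + B₂ * A₂).natDegree < m :=
      lt_of_le_of_lt (Polynomial.natDegree_add_le _ _) (by omega)
    have hlast : Sval (extendSeq F n α c) (l - 1) (B₁ * A₁ + B₂ * A₂) = 0 := by
      have h2 := (mem_ker_iff hm _ v).1 hv ⟨l - 1, by omega⟩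
      rwa [polyOf_mul_add_coeffs hPm hveq] at h2
    have hrel := last_row h2r hnd1 hndA2 hf he hl hm hlm' hB1 hB2 hlast
    set B₂n : F[X] := C β⁻¹ * B₂ with hB₂ndef
    set B₁n : F[X] := B₁ - C β⁻¹ * (B₂ * X ^ g) with hB₁ndef
    have hid : B₁ * A₁ + B₂ * A₂ = B₁n * A₁ + B₂n * A₂' := by
      rw [hB₁ndef, hB₂ndef, hA₂'def]
      linear_combination (-(B₂ * A₂)) * hββ
    refine ⟨B₁n, B₂n, ?_, ?_, by rw [hveq, hid]⟩
    · -- degLE B₁n ((m:ℤ) - (r+1) - 1)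
      intro i hi
      push_cast at hi
      rw [hB₁ndef, Polynomial.coeff_sub, Polynomial.coeff_C_mul,
        Polynomial.coeff_mul_X_pow']
      rcases Int.lt_or_le ((m : ℤ) - r - 1) (i : ℤ) with hcase | hcase
      · rw [hB1 i (by omega)]
        split_ifs with hgi
        · rw [hB2 (i - g) (by push_cast; omega)]
          ring
        · ring
      · -- i = m - r - 1
        have him : (i : ℤ) = (m : ℤ) - r - 1 := by omega
        rcases Nat.lt_or_ge r l with hrl | hrl
        · have hB20 : B₂ = 0 := eq_zero_of_degLE_neg hB2 (by omega)
          rw [hB20] at hrel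
          simp only [Polynomial.coeff_zero, zero_mul, add_zero] at hrel
          have : B₁.coeff (m - r - 1) = 0 := by
            rcases mul_eq_zero.1 hrel with h | h
            · exact h
            · exact absurd h hs
          rw [show i = m - r - 1 by omega, this, hB20]
          simp
        · have hr1 : 1 ≤ r := by omega
          have hgi : g ≤ i := by omega
          rw [if_pos hgi]
          have hig : i - g = r - l := by omega
          rw [hig]
          rw [← hsdef, ← hd hr1] at hrel
          -- hrel : B₁.coeff (m-r-1) * s + B₂.coeff (r-l) * d = 0
          have him' : i = m - r - 1 := by omega
          rw [him']
          have hβinv : β⁻¹ = -d / s := by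
            have h1 : β * (-d / s) = 1 := by rw [hβdef]; field_simp
            exact inv_eq_of_mul_eq_one_right h1
          rw [hβinv]
          field_simp
          linear_combination hrel
    · intro i hi
      rw [hB₂ndef, Polynomial.coeff_C_mul, hB2 i (by push_cast at hi ⊢; omega), mul_zero]
  · rintro ⟨B₁, B₂, hB1, hB2, rfl⟩
    have hPm1 : (B₁ * A₁).natDegree < m := by
      refine natDegree_comb_lt (k := r + 1) ?_ (by omega) hm
      intro i hi
      exact hB1 i (by push_cast at hi ⊢; omega)
    have hPm2 : (B₂ * A₂').natDegree < m := by
      refine natDegree_comb_lt (k := n + 2 - r) ?_ hndA2' hm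
      intro i hi
      exact hB2 i (by push_cast at hi ⊢; omega)
    have hPm : (B₁ * A₁ + B₂ * A₂').natDegree < m :=
      lt_of_le_of_lt (Polynomial.natDegree_add_le _ _) (by omega)
    rw [mem_ker_iff hm]
    intro i
    rw [polyOf_coeffs _ hPm, Sval_add, Sval_mul, Sval_mul]
    have hz1 : ∀ j ∈ B₁.support,
        B₁.coeff j * Sval (extendSeq F n α c) ((i : ℕ) + j) A₁ = 0 := by
      intro j hj
      have hc : (j : ℤ) ≤ (m : ℤ) - (r + 1) - 1 := by
        by_contra hgt
        exact (Polynomial.mem_support_iff.1 hj) (hB1 j (by push_cast; omega))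
      rw [hf'_ext h2r hnd1 hf _ (by have := i.2; omega), mul_zero]
    have hz2 : ∀ j ∈ B₂.support,
        B₂.coeff j * Sval (extendSeq F n α c) ((i : ℕ) + j) A₂' = 0 := by
      intro j hj
      have hc : (j : ℤ) ≤ (m : ℤ) - ((n : ℤ) + 2 - r) - 1 := by
        by_contra hgt
        exact (Polynomial.mem_support_iff.1 hj) (hB2 j (by push_cast; omega))
      have hr1 : 1 ≤ r := by omega
      rw [hA₂'def, Sval_add, Sval_C_mul, Sval_X_pow_mul]
      rcases Nat.lt_or_ge ((i : ℕ) + j) (r - 1) with hij | hij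
      · rw [he'_ext h2r hndA2 he _ (by omega),
          hf'_ext h2r hnd1 hf _ (by have := i.2; omega), mul_zero, add_zero, mul_zero]
      · have hij' : (i : ℕ) + j = r - 1 := by have := i.2; omega
        rw [hij', show r - 1 + g = n + 1 - r by omega]
        have e2 : Sval (extendSeq F n α c) (r - 1) A₂ = Sval α (r - 1) A₂ :=
          Sval_extend (by omega)
        rw [e2, ← hd hr1, ← hsdef, hβdef]
        have : -s / d * d + s = 0 := by field_simp; ring
        rw [this, mul_zero]
    rw [Finset.sum_eq_zero hz1, Finset.sum_eq_zero hz2, add_zero]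


/-- rank of the near-square extended Hankel matrix, from the kernel description. -/
lemma rank_from_charseq {r' : ℕ} {α' : ℕ → F} {A₁ A₂'' : F[X]}
    (hcs : IsCharSeq F (n + 1) r' A₁ A₂'' α') {l₀ m₀ : ℕ}
    (hl₀ : 1 ≤ l₀) (hlm : l₀ + m₀ = n + 3) (hr'm : r' + 1 ≤ m₀)
    (hneg : (m₀ : ℤ) - ((n : ℤ) + 1 + 2 - r') - 1 < 0)
    (hndA1 : A₁.natDegree ≤ r') (hA1 : A₁ ≠ 0) :
    (hankel F l₀ m₀ α').rank = r' := by
  have hm₀ : 1 ≤ m₀ := by omega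
  have hset := hcs l₀ m₀ hl₀ hm₀ (by omega)
  rw [Set.ext_iff] at hset
  set Φ : (Fin (m₀ - r') → F) →ₗ[F] (Fin m₀ → F) :=
    { toFun := fun w => fun i : Fin m₀ => (polyOf w * A₁).coeff (i : ℕ)
      map_add' := by
        intro u w
        funext i
        show (polyOf (u + w) * A₁).coeff (i : ℕ) = _
        rw [polyOf_add, add_mul, Polynomial.coeff_add]
        rfl
      map_smul' := by
        intro a w
        funext i
        show (polyOf (a • w) * A₁).coeff (i : ℕ) = _
        rw [polyOf_smul, mul_assoc, Polynomial.coeff_C_mul]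
        rfl } with hΦdef
  have hΦ : ∀ w, Φ w = fun i : Fin m₀ => (polyOf w * A₁).coeff (i : ℕ) := fun w => rfl
  have hdegΦ : ∀ w : Fin (m₀ - r') → F, (polyOf w * A₁).natDegree < m₀ := by
    intro w
    by_cases h0 : polyOf w = 0
    · rw [h0, zero_mul]
      simpa using (show 0 < m₀ by omega)
    · have h1 : (polyOf w).natDegree < m₀ - r' := natDegree_polyOf_lt (by omega) w
      calc (polyOf w * A₁).natDegree ≤ (polyOf w).natDegree + A₁.natDegree :=
            Polynomial.natDegree_mul_le
        _ < m₀ := by omega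
  have hinj : Function.Injective Φ := by
    intro u w huw
    have h0 : Φ (u - w) = 0 := by rw [map_sub, huw, sub_self]
    have h1 : polyOf (u - w) * A₁ = 0 := by
      refine eq_zero_of_coeffs (hdegΦ (u - w)) fun i => ?_
      have := congrFun h0 i
      rwa [hΦ, Pi.zero_apply] at this
    have h2 : polyOf (u - w) = 0 := by
      rcases mul_eq_zero.1 h1 with h | h
      · exact h
      · exact absurd h hA1
    have h3 : u - w = 0 := by
      funext j
      have := congrArg (fun P : F[X] => P.coeff (j : ℕ)) h2
      simp only [coeff_polyOf, dif_pos j.2, Polynomial.coeff_zero] at this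
      exact this
    rw [← sub_eq_zero]
    exact h3
  have hker : ∀ v, (hankel F l₀ m₀ α').mulVec v = 0 ↔ v ∈ LinearMap.range Φ := by
    intro v
    constructor
    · intro hv
      obtain ⟨B₁, B₂, hB1, hB2, hveq⟩ := (hset v).1 hv
      have hB20 : B₂ = 0 := eq_zero_of_degLE_neg hB2 (by push_cast; omega)
      have hndB1 : B₁.natDegree < m₀ - r' := by
        have : B₁.natDegree ≤ m₀ - r' - 1 := by
          apply natDegree_le_of_degLE
          intro i hi
          exact hB1 i (by push_cast; omega)
        omega
      refine ⟨fun j : Fin (m₀ - r') => B₁.coeff (j : ℕ), ?_⟩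
      rw [hΦ, polyOf_coeffs B₁ hndB1, hveq]
      funext i
      rw [hB20]
      simp
    · rintro ⟨w, rfl⟩
      refine (hset _).2 ⟨polyOf w, 0, ?_, degLE_zero _, ?_⟩
      · apply degLE_of_natDegree_le
        have h1 : (polyOf w).natDegree < m₀ - r' := by
          by_cases h0 : polyOf w = 0
          · rw [h0]; simpa [Polynomial.natDegree_zero] using by omega
          · exact natDegree_polyOf_lt (by omega) w
        push_cast
        omega
      · rw [hΦ]
        funext i
        simp
  have := rank_of_ker (hankel F l₀ m₀ α') (m₀ - r') Φ hinj hker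
  omega


lemma det_r_ne (hρ : rhoC F n α = r) : (hankel F r r α).det ≠ 0 := by
  have hmem := Nat.sSup_mem (s := {l | l ≤ (n + 2) / 2 ∧ (hankel F l l α).det ≠ 0})
    ⟨0, by
      refine ⟨by omega, ?_⟩
      rw [Matrix.det_isEmpty]
      exact one_ne_zero⟩
    ⟨(n + 2) / 2, fun x hx => hx.1⟩
  rw [show sSup {l | l ≤ (n + 2) / 2 ∧ (hankel F l l α).det ≠ 0} = rhoC F n α from rfl,
    hρ] at hmem
  exact hmem.2

lemma hankel_extend_eq {k k' : ℕ} (hkk : k + k' ≤ n + 2) :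
    hankel F k k' (extendSeq F n α c) = hankel F k k' α := by
  ext i j
  show extendSeq F n α c ((i : ℕ) + (j : ℕ)) = α ((i : ℕ) + (j : ℕ))
  exact extendSeq_ne (by have := i.2; have := j.2; omega)

lemma hankel_submatrix {l' m' k : ℕ} (α' : ℕ → F) (hkl : k ≤ l') (hkm : k ≤ m') :
    (hankel F l' m' α').submatrix (Fin.castLE hkl) (Fin.castLE hkm) = hankel F k k α' := by
  ext i j
  rfl

lemma rho_new {r'' : ℕ} (h2r : 2 * r ≤ n) (hdet : (hankel F r r α).det ≠ 0)
    (hrankold : (hankel F ((n + 2) / 2) ((n + 3) / 2) α).rank = r)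
    (hr : r + 1 ≤ (n + 2) / 2)
    (hrk : (hankel F ((n + 3) / 2) ((n + 4) / 2) (extendSeq F n α c)).rank = r'')
    (hr'' : r'' ≤ r + 1) :
    rhoC F (n + 1) (extendSeq F n α c) = r := by
  have hdet' : (hankel F r r (extendSeq F n α c)).det ≠ 0 := by
    rw [hankel_extend_eq (by omega)]
    exact hdet
  have hmem : r ∈ {l | l ≤ (n + 1 + 2) / 2 ∧ (hankel F l l (extendSeq F n α c)).det ≠ 0} :=
    ⟨by omega, hdet'⟩
  have hub : ∀ l ∈ {l | l ≤ (n + 1 + 2) / 2 ∧ (hankel F l l (extendSeq F n α c)).det ≠ 0},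
      l ≤ r := by
    rintro l ⟨hle, hdl⟩
    by_contra hgt
    push_neg at hgt
    have hl1 : l ≤ (n + 3) / 2 := by omega
    have hl2 : l ≤ (n + 4) / 2 := by omega
    have hrk1 : l ≤ (hankel F ((n + 3) / 2) ((n + 4) / 2) (extendSeq F n α c)).rank := by
      apply rank_ge_of_submatrix _ l hl1 hl2
      rw [hankel_submatrix]
      exact hdl
    have hlr1 : l = r + 1 := by omega
    subst hlr1
    have hdl' : (hankel F (r + 1) (r + 1) α).det ≠ 0 := by
      rw [← hankel_extend_eq (n := n) (c := c) (by omega)]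
      exact hdl
    have hrk2 : r + 1 ≤ (hankel F ((n + 2) / 2) ((n + 3) / 2) α).rank := by
      apply rank_ge_of_submatrix _ (r + 1) hr (by omega)
      rw [hankel_submatrix]
      exact hdl'
    omega
  show sSup {l | l ≤ (n + 1 + 2) / 2 ∧ (hankel F l l (extendSeq F n α c)).det ≠ 0} = r
  refine le_antisymm (csSup_le ⟨r, hmem⟩ hub) (le_csSup ⟨(n + 1 + 2) / 2, fun x hx => hx.1⟩ hmem)

lemma pi_new {r'' : ℕ}
    (hrk : (hankel F ((n + 3) / 2) ((n + 4) / 2) (extendSeq F n α c)).rank = r'')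
    (hrho : rhoC F (n + 1) (extendSeq F n α c) = r) :
    piC F (n + 1) (extendSeq F n α c) = r'' - r := by
  show (hankel F ((n + 1 + 2) / 2) ((n + 1 + 3) / 2) (extendSeq F n α c)).rank
    - rhoC F (n + 1) (extendSeq F n α c) = r'' - r
  rw [show n + 1 + 2 = n + 3 by omega, show n + 1 + 3 = n + 4 by omega, hrk, hrho]

lemma bij_affine {p q : F} (hp : p ≠ 0) : Function.Bijective (fun x : F => p * x + q) := by
  constructor
  · intro x y h
    simp only at h
    exact mul_left_cancel₀ hp (add_right_cancel h)
  · intro y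
    refine ⟨(y - q) / p, ?_⟩
    field_simp
    ring

end Main

end Stmt17

open Stmt17 in
theorem stmt_17 (F : Type) [Field F] [Fintype F] (n r : ℕ) (α : ℕ → F)
    (A₁ A₂ : Polynomial F)
    (hr : r + 1 ≤ (n + 2) / 2)
    (hrank : (hankel F ((n + 2) / 2) ((n + 3) / 2) α).rank = r)
    (hρ : rhoC F n α = r) (hπ : piC F n α = 0)
    (hcop : IsCoprime A₁ A₂)
    (hd1 : A₁.degree = (r : WithBot ℕ)) (hd2 : A₂.degree < (r : WithBot ℕ))
    (hchar : IsCharSeq F n r A₁ A₂ α) :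
    ∃ b : F → F, Function.Bijective b ∧ ∀ c : F,
      rhoC F (n + 1) (extendSeq F n α c) = r ∧
      (b c = 0 →
        piC F (n + 1) (extendSeq F n α c) = 0 ∧
        (hankel F ((n + 3) / 2) ((n + 4) / 2) (extendSeq F n α c)).rank = r ∧
        IsCharSeq F (n + 1) r A₁ A₂ (extendSeq F n α c)) ∧
      (b c ≠ 0 →
        piC F (n + 1) (extendSeq F n α c) = 1 ∧
        (hankel F ((n + 3) / 2) ((n + 4) / 2) (extendSeq F n α c)).rank = r + 1 ∧
        IsCharSeq F (n + 1) (r + 1) A₁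
          (Polynomial.C (b c) * A₂ + Polynomial.X ^ (n + 2 - 2 * r) * A₁)
          (extendSeq F n α c)) := by
  classical
  have h2r : 2 * r ≤ n := by omega
  have hA1ne : A₁ ≠ 0 := fun h => by simp [h] at hd1
  have hnd1 : A₁.natDegree = r := Polynomial.natDegree_eq_of_degree_eq_some hd1
  have hndA2 : A₂.natDegree ≤ r - 1 := by
    by_cases hA2 : A₂ = 0
    · simp [hA2]
    · have h1 := Polynomial.degree_eq_natDegree hA2 ▸ hd2
      have h2 : A₂.natDegree < r := by exact_mod_cast h1
      omega
  have hf := fzero (by omega) hnd1 hchar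
  have he := ezero (by omega) hndA2 hchar
  have hdet := det_r_ne hρ
  have hdne : 1 ≤ r → Sval α (r - 1) A₂ ≠ 0 := fun hr1 =>
    e_ne (n := n) (r := r) (α := α) (A₂ := A₂) hr1 (by omega) hndA2
      (A2_ne_zero hr1 hcop hd1) hdet he
  set d : F := if 1 ≤ r then Sval α (r - 1) A₂ else 1 with hddef
  have hd0 : d ≠ 0 := by
    rw [hddef]
    split_ifs with h
    · exact hdne h
    · exact one_ne_zero
  have hdd : 1 ≤ r → d = Sval α (r - 1) A₂ := fun h => by rw [hddef, if_pos h]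
  have ha : A₁.coeff r ≠ 0 := by
    have h1 := Polynomial.leadingCoeff_ne_zero.2 hA1ne
    rwa [Polynomial.leadingCoeff, hnd1] at h1
  refine ⟨fun c => -(Sval (extendSeq F n α c) (n + 1 - r) A₁) / d, ?_, ?_⟩
  · -- bijectivity
    have haff : ∀ c : F, -(Sval (extendSeq F n α c) (n + 1 - r) A₁) / d
        = (-(A₁.coeff r) / d) * c
          + -(∑ k ∈ Finset.range r, α (n + 1 - r + k) * A₁.coeff k) / d := by
      intro c
      have hsv : Sval (extendSeq F n α c) (n + 1 - r) A₁
          = (∑ k ∈ Finset.range r, α (n + 1 - r + k) * A₁.coeff k) + c * A₁.coeff r := by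
        rw [Sval_eq_range _ _ _ (show A₁.natDegree < r + 1 by omega), Finset.sum_range_succ]
        congr 1
        · refine Finset.sum_congr rfl fun k hk => ?_
          rw [Finset.mem_range] at hk
          rw [extendSeq_ne (by omega)]
        · rw [show n + 1 - r + r = n + 1 by omega, extendSeq_top]
      rw [hsv]
      field_simp
      ring
    have heq : (fun c : F => -(Sval (extendSeq F n α c) (n + 1 - r) A₁) / d)
        = fun c : F => (-(A₁.coeff r) / d) * c
          + -(∑ k ∈ Finset.range r, α (n + 1 - r + k) * A₁.coeff k) / d := funext haff
    rw [heq]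
    exact bij_affine (div_ne_zero (neg_ne_zero.2 ha) hd0)
  · intro c
    by_cases hs : Sval (extendSeq F n α c) (n + 1 - r) A₁ = 0
    · have hbc : -(Sval (extendSeq F n α c) (n + 1 - r) A₁) / d = 0 := by
        rw [hs, neg_zero, zero_div]
      have hcs := charseq_zero h2r hnd1 hndA2 hcop hd1 hd2 hchar hf he hdne hs
      have hrk : (hankel F ((n + 3) / 2) ((n + 4) / 2) (extendSeq F n α c)).rank = r :=
        rank_from_charseq hcs (by omega) (by omega) (by omega) (by omega)
          (le_of_eq hnd1) hA1ne
      have hrho := rho_new h2r hdet hrank hr hrk (by omega)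
      refine ⟨hrho, fun _ => ⟨?_, hrk, hcs⟩, fun hne => absurd hbc hne⟩
      rw [pi_new hrk hrho]
      omega
    · have hbc : -(Sval (extendSeq F n α c) (n + 1 - r) A₁) / d ≠ 0 :=
        div_ne_zero (neg_ne_zero.2 hs) hd0
      have hcs := charseq_one h2r hnd1 hndA2 hcop hd1 hd2 hchar hf he hd0 hdd hs
      have hrk : (hankel F ((n + 3) / 2) ((n + 4) / 2) (extendSeq F n α c)).rank = r + 1 :=
        rank_from_charseq hcs (by omega) (by omega) (by omega) (by omega)
          (by omega) hA1ne
      have hrho := rho_new h2r hdet hrank hr hrk (le_refl (r + 1))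
      refine ⟨hrho, fun h0 => absurd h0 hbc, fun _ => ⟨?_, hrk, hcs⟩⟩
      rw [pi_new hrk hrho]
      omega
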